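/- Let $X$ be a real vector space, $C \subset X$ nonempty convex, and $h_n : C \to \mathbb{R}$ a sequence of convex functions converging pointwise to $h_\infty$. Then exactly one of the following holds: (A1) there exists $u_0 \in C$ with $\sup_{n \in \mathbb{N}} h_n(u_0) < 0$; or (A2) there exist nonnegative reals $(\alpha_\infty, \alpha_0, \alpha_1, \ldots)$ with $\alpha_\infty + \sum_{n \geq 0} \alpha_n = 1$ such that $\alpha_\infty h_\infty(u) + \sum_{n \geq 0} \alpha_n h_n(u) \geq 0$ for all $u \in C$. -/

import Mathlib

open Filter Topology


def Tset : Set (ℕ → ℝ) := {β | (∀ n, 0 ≤ β n) ∧ ∀ N : ℕ, ∑ n ∈ Finset.range N, β n ≤ 1}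

lemma Tset_summable {β : ℕ → ℝ} (hβ : β ∈ Tset) : Summable β :=
  summable_of_sum_range_le hβ.1 hβ.2

lemma Tset_tsum_le {β : ℕ → ℝ} (hβ : β ∈ Tset) : ∑' n, β n ≤ 1 :=
  Real.tsum_le_of_sum_range_le hβ.1 hβ.2

lemma Tset_compact : IsCompact Tset := by
  have hsub : Tset ⊆ Set.pi Set.univ (fun _ : ℕ => Set.Icc (0:ℝ) 1) := by
    intro β hβ n _
    refine ⟨hβ.1 n, ?_⟩
    calc β n ≤ ∑ k ∈ Finset.range (n+1), β k := by
          exact Finset.single_le_sum (fun k _ => hβ.1 k) (Finset.self_mem_range_succ n)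
      _ ≤ 1 := hβ.2 (n+1)
  have hcomp : IsCompact (Set.pi Set.univ (fun _ : ℕ => Set.Icc (0:ℝ) 1)) :=
    isCompact_univ_pi (fun _ => isCompact_Icc)
  refine hcomp.of_isClosed_subset ?_ hsub
  have h1 : IsClosed {β : ℕ → ℝ | ∀ n, 0 ≤ β n} := by
    have : {β : ℕ → ℝ | ∀ n, 0 ≤ β n} = ⋂ n, {β : ℕ → ℝ | 0 ≤ β n} := by
      ext β; simp [Set.mem_iInter]
    rw [this]
    exact isClosed_iInter fun n => isClosed_le continuous_const (continuous_apply n)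
  have h2 : IsClosed {β : ℕ → ℝ | ∀ N : ℕ, ∑ n ∈ Finset.range N, β n ≤ 1} := by
    have : {β : ℕ → ℝ | ∀ N : ℕ, ∑ n ∈ Finset.range N, β n ≤ 1}
        = ⋂ N : ℕ, {β : ℕ → ℝ | ∑ n ∈ Finset.range N, β n ≤ 1} := by
      ext β; simp [Set.mem_iInter]
    rw [this]
    refine isClosed_iInter fun N => isClosed_le ?_ continuous_const
    exact continuous_finset_sum _ (fun n _ => continuous_apply n)
  exact h1.inter h2

lemma bdd_of_tendsto {c : ℕ → ℝ} {l : ℝ} (hc : Tendsto c atTop (𝓝 l)) :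
    ∃ M, ∀ n, |c n| ≤ M := by
  obtain ⟨M, hM⟩ := hc.abs.bddAbove_range
  exact ⟨M, fun n => hM ⟨n, rfl⟩⟩

lemma summable_mul_of_bdd {β c : ℕ → ℝ} (hβ : β ∈ Tset) {M : ℝ}
    (hM : ∀ n, |c n| ≤ M) : Summable (fun n => β n * c n) := by
  have habs : Summable (fun n => |β n * c n|) := by
    refine Summable.of_nonneg_of_le (fun n => abs_nonneg _) (fun n => ?_)
      ((Tset_summable hβ).mul_right M)
    rw [abs_mul, abs_of_nonneg (hβ.1 n)]
    exact mul_le_mul_of_nonneg_left (hM n) (hβ.1 n)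
  exact habs.of_abs

lemma abs_tsum_le' {f : ℕ → ℝ} (hf : Summable fun n => |f n|) :
    |∑' n, f n| ≤ ∑' n, |f n| := by
  have hf' : Summable fun n => ‖f n‖ := by simpa [Real.norm_eq_abs] using hf
  have := norm_tsum_le_tsum_norm (E := ℝ) (ι := ℕ) (f := f) hf'
  simpa [Real.norm_eq_abs] using this

set_option maxHeartbeats 1000000 in
lemma Tset_continuousOn {c : ℕ → ℝ} (hc : Tendsto c atTop (𝓝 0)) :
    ContinuousOn (fun β : ℕ → ℝ => ∑' n, β n * c n) Tset := by
  obtain ⟨M, hM⟩ := bdd_of_tendsto hc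
  have hsum : ∀ β ∈ Tset, Summable (fun n => β n * c n) :=
    fun β hβ => summable_mul_of_bdd hβ hM
  have hunif : TendstoUniformlyOn
      (fun N (β : ℕ → ℝ) => ∑ n ∈ Finset.range N, β n * c n)
      (fun β => ∑' n, β n * c n) atTop Tset := by
    rw [Metric.tendstoUniformlyOn_iff]
    intro ε hε
    obtain ⟨N₀, hN₀⟩ := (Metric.tendsto_atTop.mp hc) (ε/2) (by linarith)
    filter_upwards [eventually_ge_atTop N₀] with N hN β hβ
    have hs := hsum β hβ
    have hsplit := (Summable.sum_add_tsum_nat_add N hs).symm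
    have hshift : Summable (fun n => β (n + N) * c (n + N)) :=
      (summable_nat_add_iff N).mpr hs
    have hβshift : Summable (fun n => β (n + N)) :=
      (summable_nat_add_iff N).mpr (Tset_summable hβ)
    rw [Real.dist_eq]
    have h1 : (∑' n, β n * c n) - ∑ n ∈ Finset.range N, β n * c n
        = ∑' n, β (n + N) * c (n + N) := by
      rw [← Summable.sum_add_tsum_nat_add N hs]; ring
    rw [h1]
    have h2 : |∑' n, β (n + N) * c (n + N)| ≤ ∑' n, β (n + N) * (ε/2) := by
      calc |∑' n, β (n + N) * c (n + N)| ≤ ∑' n, |β (n + N) * c (n + N)| := by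
            exact abs_tsum_le' hshift.abs
        _ ≤ ∑' n, β (n + N) * (ε/2) := by
            refine Summable.tsum_le_tsum (fun n => ?_) hshift.abs (hβshift.mul_right _)
            rw [abs_mul, abs_of_nonneg (hβ.1 _)]
            refine mul_le_mul_of_nonneg_left ?_ (hβ.1 _)
            have := hN₀ (n + N) (le_trans hN (Nat.le_add_left N n))
            rw [Real.dist_eq, sub_zero] at this
            exact this.le
    have h3 : ∑' n, β (n + N) * (ε/2) ≤ ε/2 := by
      rw [tsum_mul_right]
      have : ∑' n, β (n + N) ≤ 1 := by
        have := Summable.sum_add_tsum_nat_add N (Tset_summable hβ)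
        have hnn : 0 ≤ ∑ n ∈ Finset.range N, β n :=
          Finset.sum_nonneg (fun n _ => hβ.1 n)
        nlinarith [Tset_tsum_le hβ]
      nlinarith [hε.le]
    calc |∑' n, β (n + N) * c (n + N)| ≤ ε/2 := le_trans h2 h3
      _ < ε := by linarith
  refine hunif.continuousOn ?_
  refine Filter.Frequently.of_forall fun N => ?_
  exact (continuous_finset_sum _ (fun n _ => (continuous_apply n).mul continuous_const)).continuousOn

lemma Tset_zero_mem : (fun _ : ℕ => (0:ℝ)) ∈ Tset :=
  ⟨fun _ => le_refl 0, fun N => by simp⟩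

lemma finite_step {X : Type*} [AddCommGroup X] [Module ℝ X]
    {C : Set X} (hCconv : Convex ℝ C) {h : ℕ → X → ℝ} {hinf : X → ℝ}
    (hconv : ∀ n, ConvexOn ℝ C (h n))
    (hlim : ∀ u ∈ C, Tendsto (fun n => h n u) atTop (𝓝 (hinf u)))
    (hkey : ∀ u ∈ C, ∀ ε > 0, ∃ n, -ε < h n u)
    {ι : Type*} [Fintype ι] (u : ι → X) (hu : ∀ i, u i ∈ C) :
    ∃ β ∈ Tset, ∀ i, 0 ≤ hinf (u i) + ∑' n, β n * (h n (u i) - hinf (u i)) := by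
  classical
  set v : ℕ → ι → ℝ := fun n i => h n (u i) with hv
  set vinf : ι → ℝ := fun i => hinf (u i) with hvinf
  have hvt : Tendsto v atTop (𝓝 vinf) := tendsto_pi_nhds.mpr fun i => hlim _ (hu i)
  set S : Set (ι → ℝ) := insert vinf (Set.range v) with hS
  have hScomp : IsCompact S := hvt.isCompact_insert_range
  have hc : ∀ i, Tendsto (fun n => h n (u i) - hinf (u i)) atTop (𝓝 0) := by
    intro i
    have := (hlim _ (hu i)).sub (tendsto_const_nhds (x := hinf (u i)))
    simpa using this
  set Φ : (ℕ → ℝ) → ι → ℝ :=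
    fun β i => hinf (u i) + ∑' n, β n * (h n (u i) - hinf (u i)) with hΦ
  have hΦcont : ContinuousOn Φ Tset := continuousOn_pi.mpr fun i =>
    continuousOn_const.add (Tset_continuousOn (hc i))
  have hsummable : ∀ i, ∀ β ∈ Tset, Summable (fun n => β n * (h n (u i) - hinf (u i))) := by
    intro i β hβ
    obtain ⟨M, hM⟩ := bdd_of_tendsto (hc i)
    exact summable_mul_of_bdd hβ hM
  have hconvim : Convex ℝ (Φ '' Tset) := by
    rintro - ⟨β, hβ, rfl⟩ - ⟨β', hβ', rfl⟩ p q hp hq hpq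
    refine ⟨fun n => p * β n + q * β' n,
      ⟨fun n => add_nonneg (mul_nonneg hp (hβ.1 n)) (mul_nonneg hq (hβ'.1 n)), fun N => ?_⟩, ?_⟩
    · have h1 := hβ.2 N
      have h2 := hβ'.2 N
      rw [Finset.sum_add_distrib, ← Finset.mul_sum, ← Finset.mul_sum]
      nlinarith
    · funext i
      have s1 := hsummable i β hβ
      have s2 := hsummable i β' hβ'
      simp only [Φ, Pi.add_apply, Pi.smul_apply, smul_eq_mul]
      have : ∀ n, (p * β n + q * β' n) * (h n (u i) - hinf (u i))
          = p * (β n * (h n (u i) - hinf (u i))) + q * (β' n * (h n (u i) - hinf (u i))) := by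
        intro n; ring
      rw [tsum_congr this, Summable.tsum_add (s1.mul_left p) (s2.mul_left q),
        tsum_mul_left, tsum_mul_left]
      linear_combination (hinf (u i)) * hpq.symm
  have hcompim : IsCompact (Φ '' Tset) := Tset_compact.image_of_continuousOn hΦcont
  have hΦS : S ⊆ Φ '' Tset := by
    rintro y (rfl | ⟨n, rfl⟩)
    · refine ⟨(fun _ => 0), Tset_zero_mem, ?_⟩
      funext i; simp [Φ]; rfl
    · refine ⟨(fun m => if m = n then 1 else 0), ⟨fun m => by positivity, fun N => ?_⟩, ?_⟩
      · rw [Finset.sum_ite_eq' (Finset.range N) n (fun _ => (1:ℝ))]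
        split <;> norm_num
      · funext i
        have : ∀ m, (if m = n then (1:ℝ) else 0) * (h m (u i) - hinf (u i))
            = if m = n then (h n (u i) - hinf (u i)) else 0 := by
          intro m; by_cases hm : m = n <;> simp [hm]
        simp only [Φ, tsum_congr this, tsum_ite_eq]
        simp [v]
  have hhull : closure (convexHull ℝ S) ⊆ Φ '' Tset :=
    closure_minimal (convexHull_min hΦS hconvim) hcompim.isClosed
  set D := closure (convexHull ℝ S) with hD
  have hDcomp : IsCompact D :=
    (isBounded_convexHull.mpr hScomp.isBounded).isCompact_closure
  have hDconv : Convex ℝ D := (convex_convexHull ℝ S).closure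
  set P : Set (ι → ℝ) := {y | ∀ i, 0 ≤ y i} with hP
  have hPconv : Convex ℝ P := by
    intro y hy z hz p q hp hq hpq i
    have := hy i; have := hz i
    simp only [Pi.add_apply, Pi.smul_apply, smul_eq_mul]
    positivity
  have hPclosed : IsClosed P := by
    have : P = ⋂ i, {y : ι → ℝ | 0 ≤ y i} := by ext y; simp [P, Set.mem_iInter]
    rw [this]
    exact isClosed_iInter fun i => isClosed_le continuous_const (continuous_apply i)
  by_cases hDP : (D ∩ P).Nonempty
  · obtain ⟨y, hyD, hyP⟩ := hDP
    obtain ⟨β, hβT, hβy⟩ := hhull hyD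
    refine ⟨β, hβT, fun i => ?_⟩
    have h0 : 0 ≤ y i := hyP i
    rw [← hβy] at h0
    exact h0
  · exfalso
    have hdisj : Disjoint D P := Set.disjoint_iff_inter_eq_empty.mpr
      (Set.not_nonempty_iff_eq_empty.mp hDP)
    obtain ⟨f, a, b, hfa, hab, hfb⟩ :=
      geometric_hahn_banach_compact_closed hDconv hDcomp hPconv hPclosed hdisj
    have hb0 : b < 0 := by
      have := hfb 0 (fun i => le_refl 0)
      simpa using this
    set c : ι → ℝ := fun i => f (fun j => if i = j then (1:ℝ) else 0) with hcdef
    have hfy : ∀ y : ι → ℝ, f y = ∑ i, y i * c i := by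
      intro y
      conv_lhs => rw [pi_eq_sum_univ y]
      rw [map_sum]
      refine Finset.sum_congr rfl fun i _ => ?_
      rw [map_smul, smul_eq_mul]
    have hcnn : ∀ i, 0 ≤ c i := by
      intro i
      by_contra hci
      push_neg at hci
      set t := (2*b)/(c i) with ht
      have htpos : 0 ≤ t := le_of_lt (div_pos_of_neg_of_neg (by linarith) hci)
      have hzP : t • (fun j => if i = j then (1:ℝ) else 0) ∈ P := by
        intro j
        simp only [Pi.smul_apply, smul_eq_mul]
        split <;> simp [htpos]
      have := hfb _ hzP
      rw [map_smul, smul_eq_mul] at this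
      have htc : t * f (fun j => if i = j then (1:ℝ) else 0) = 2*b := by
        show t * c i = 2*b
        rw [ht, div_mul_cancel₀ _ (ne_of_lt hci)]
      rw [htc] at this
      linarith
    have hvinfD : vinf ∈ D := subset_closure (subset_convexHull ℝ S (Set.mem_insert _ _))
    have hvD : ∀ n, v n ∈ D := fun n =>
      subset_closure (subset_convexHull ℝ S (Set.mem_insert_of_mem _ ⟨n, rfl⟩))
    set csum := ∑ i, c i with hcsum
    have hcsum0 : 0 ≤ csum := Finset.sum_nonneg fun i _ => hcnn i
    have ha0 : a < 0 := lt_trans hab hb0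
    have hcpos : 0 < csum := by
      rcases eq_or_lt_of_le hcsum0 with heq | hlt
      · exfalso
        have hall : ∀ i ∈ Finset.univ, c i = 0 :=
          (Finset.sum_eq_zero_iff_of_nonneg (fun i _ => hcnn i)).mp heq.symm
        have : f vinf = 0 := by
          rw [hfy]
          refine Finset.sum_eq_zero fun i _ => ?_
          rw [hall i (Finset.mem_univ i), mul_zero]
        have := hfa vinf hvinfD
        linarith
      · exact hlt
    set w : ι → ℝ := fun i => c i / csum with hw
    have hwnn : ∀ i ∈ Finset.univ, 0 ≤ w i := fun i _ => div_nonneg (hcnn i) hcsum0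
    have hwsum : ∑ i, w i = 1 := by
      rw [← Finset.sum_div]
      field_simp
      exact hcsum.symm
    set ustar := ∑ i, w i • u i with hustar
    have hustarC : ustar ∈ C := hCconv.sum_mem hwnn hwsum fun i _ => hu i
    have hfun : ∀ n, h n ustar ≤ a / csum := by
      intro n
      have hJ := (hconv n).map_sum_le hwnn hwsum fun i _ => hu i
      have h2 : ∑ i, w i * h n (u i) = f (v n) / csum := by
        rw [hfy, Finset.sum_div]
        refine Finset.sum_congr rfl fun i _ => ?_
        simp only [w, v]
        ring
      have h3 : f (v n) < a := hfa _ (hvD n)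
      calc h n ustar ≤ ∑ i, w i * h n (u i) := hJ
        _ = f (v n) / csum := h2
        _ ≤ a / csum := by
            exact (div_le_div_iff_of_pos_right hcpos).mpr h3.le
    have haneg : a / csum < 0 := div_neg_of_neg_of_pos ha0 hcpos
    obtain ⟨n, hn'⟩ := hkey ustar hustarC (-(a/csum)) (by linarith)
    rw [neg_neg] at hn'
    exact absurd (hfun n) (not_le.mpr hn')


theorem stmt_12 {X : Type*} [AddCommGroup X] [Module ℝ X]
    (C : Set X) (hC : C.Nonempty) (hCconv : Convex ℝ C)
    (h : ℕ → X → ℝ) (hinf : X → ℝ)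
    (hconv : ∀ n, ConvexOn ℝ C (h n))
    (hlim : ∀ u ∈ C, Tendsto (fun n => h n u) atTop (𝓝 (hinf u))) :
    Xor'
      (∃ u₀ ∈ C, (⨆ n : ℕ, h n u₀) < 0)
      (∃ (αinf : ℝ) (α : ℕ → ℝ), 0 ≤ αinf ∧ (∀ n, 0 ≤ α n) ∧ Summable α ∧
        αinf + ∑' n, α n = 1 ∧
        ∀ u ∈ C, 0 ≤ αinf * hinf u + ∑' n, α n * h n u) := by
  classical
  rw [Xor']
  by_cases hA : ∃ u₀ ∈ C, (⨆ n : ℕ, h n u₀) < 0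
  · refine Or.inl ⟨hA, ?_⟩
    rintro ⟨αinf, α, hαinf, hαnn, hαsum, hαtot, hineq⟩
    obtain ⟨u₀, hu₀, hsup⟩ := hA
    have hbdd : BddAbove (Set.range fun n => h n u₀) := by
      by_contra hb
      rw [Real.iSup_of_not_bddAbove hb] at hsup
      exact lt_irrefl 0 hsup
    set s := ⨆ n : ℕ, h n u₀ with hs
    have hle : ∀ n, h n u₀ ≤ s := fun n => le_ciSup hbdd n
    have hinfle : hinf u₀ ≤ s :=
      le_of_tendsto (hlim u₀ hu₀) (Filter.Eventually.of_forall hle)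
    obtain ⟨M, hM⟩ := bdd_of_tendsto (hlim u₀ hu₀)
    have htsum_le : ∑' n, α n ≤ 1 := by
      have h0 : 0 ≤ ∑' n, α n := tsum_nonneg hαnn
      linarith
    have hαT : α ∈ Tset := ⟨hαnn, fun N =>
      le_trans (Summable.sum_le_tsum (Finset.range N) (fun n _ => hαnn n) hαsum) htsum_le⟩
    have hs1 : Summable (fun n => α n * h n u₀) := summable_mul_of_bdd hαT hM
    have h2 : ∑' n, α n * h n u₀ ≤ ∑' n, α n * s :=
      Summable.tsum_le_tsum (fun n => mul_le_mul_of_nonneg_left (hle n) (hαnn n)) hs1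
        (hαsum.mul_right s)
    rw [tsum_mul_right] at h2
    have h3 := hineq u₀ hu₀
    have h4 : αinf * hinf u₀ ≤ αinf * s := mul_le_mul_of_nonneg_left hinfle hαinf
    have h5 : (αinf + ∑' n, α n) * s = s := by rw [hαtot, one_mul]
    have hsneg : s < 0 := hsup
    nlinarith [h2, h3, h4, h5]
  · refine Or.inr ⟨?_, hA⟩
    push_neg at hA
    have hkey : ∀ u ∈ C, ∀ ε > 0, ∃ n, -ε < h n u := by
      intro u hu ε hε
      have h0 : (-ε : ℝ) < ⨆ n, h n u := lt_of_lt_of_le (by linarith) (hA u hu)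
      exact exists_lt_of_lt_ciSup h0
    set K : C → Set (ℕ → ℝ) := fun u =>
      Tset ∩ {β | 0 ≤ hinf u + ∑' n, β n * (h n u.1 - hinf u.1)} with hK
    have hc : ∀ u : C, Tendsto (fun n => h n u.1 - hinf u.1) atTop (𝓝 0) := by
      intro u
      have := (hlim u.1 u.2).sub (tendsto_const_nhds (x := hinf u.1))
      simpa using this
    have hKclosed : ∀ u : C, IsClosed (K u) := by
      intro u
      have hco : ContinuousOn (fun β : ℕ → ℝ => hinf u.1 + ∑' n, β n * (h n u.1 - hinf u.1))
          Tset := continuousOn_const.add (Tset_continuousOn (hc u))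
      have : K u = Tset ∩ (fun β : ℕ → ℝ =>
          hinf u.1 + ∑' n, β n * (h n u.1 - hinf u.1)) ⁻¹' (Set.Ici 0) := by
        ext β; simp [hK, Set.mem_Ici]
      rw [this]
      exact hco.preimage_isClosed_of_isClosed Tset_compact.isClosed isClosed_Ici
    have hne : (Tset ∩ ⋂ u : C, K u).Nonempty := by
      by_contra hempty
      rw [Set.not_nonempty_iff_eq_empty] at hempty
      obtain ⟨fs, hfs⟩ := Tset_compact.elim_finite_subfamily_closed K hKclosed hempty
      obtain ⟨β, hβT, hβ⟩ := finite_step hCconv hconv hlim hkey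
        (fun i : fs => (i : C).1) (fun i => (i : C).2)
      have hmem : β ∈ Tset ∩ ⋂ u ∈ fs, K u := by
        refine ⟨hβT, Set.mem_iInter₂.mpr fun u hu => ⟨hβT, ?_⟩⟩
        exact hβ ⟨u, hu⟩
      rw [hfs] at hmem
      exact hmem
    obtain ⟨β, hβT, hβall⟩ := hne
    refine ⟨1 - ∑' n, β n, β, ?_, hβT.1, Tset_summable hβT, by ring, ?_⟩
    · linarith [Tset_tsum_le hβT]
    · intro u hu
      have hK' := (Set.mem_iInter.mp hβall ⟨u, hu⟩).2
      have hKu : 0 ≤ hinf u + ∑' n, β n * (h n u - hinf u) := hK'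
      obtain ⟨M, hM⟩ := bdd_of_tendsto (hlim u hu)
      have hs1 : Summable (fun n => β n * h n u) := summable_mul_of_bdd hβT hM
      have hrw : ∑' n, β n * (h n u - hinf u)
          = ∑' n, β n * h n u - (∑' n, β n) * hinf u := by
        have he : ∀ n, β n * (h n u - hinf u) = β n * h n u - β n * hinf u :=
          fun n => by ring
        rw [tsum_congr he, Summable.tsum_sub hs1 ((Tset_summable hβT).mul_right _), tsum_mul_right]
      rw [hrw] at hKu
      nlinarith [hKu]
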